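/- arXiv:2012.14143 — 5 statements merged into one kernel-verified Lean document; each statement's English description precedes it below -/
import Mathlib

section
/- Let ρ be a density matrix of full rank on a finite-dimensional Hilbert space A with minimum eigenvalue λ_min > 0, and let |ψ⟩ ∈ A ⊗ R be a purification of ρ. Then for every density matrix σ on A, every purification of σ on A ⊗ R can be written as (𝟙_A ⊗ T)|ψ⟩ for some operator T acting on R with ‖T‖_∞ ≤ 1/√λ_min. -/
open Matrix
open scoped Classical ComplexOrder

/-- The singular values of a matrix: square roots of the eigenvalues of `Xᴴ * X`. -/
noncomputable def singVals {m n : Type*} [Fintype m] [Fintype n] [DecidableEq n]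
    (X : Matrix m n ℂ) : n → ℝ :=
  fun i => Real.sqrt ((Matrix.isHermitian_conjTranspose_mul_self X).eigenvalues i)

/-- The operator norm `‖X‖_∞`, the largest singular value. -/
noncomputable def opNorm {m n : Type*} [Fintype m] [Fintype n] [DecidableEq n]
    (X : Matrix m n ℂ) : ℝ := ⨆ i, singVals X i

section Aux

variable {n : Type*} [Fintype n] [DecidableEq n]

lemma aux_quad_conj {a b : Type*} [Fintype a] [Fintype b] (A : Matrix a b ℂ)
    (H : Matrix a a ℂ) (x : b → ℂ) :
    star x ⬝ᵥ ((Aᴴ * H * A) *ᵥ x) = star (A *ᵥ x) ⬝ᵥ (H *ᵥ (A *ᵥ x)) := by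
  rw [star_mulVec, ← Matrix.mulVec_mulVec, ← Matrix.mulVec_mulVec,
    Matrix.dotProduct_mulVec]

lemma aux_quad_transpose {m : Type*} [Fintype m] (A : Matrix m m ℂ) (x : m → ℂ) :
    star x ⬝ᵥ (Aᵀ *ᵥ x) = star (star x) ⬝ᵥ (A *ᵥ star x) := by
  simp only [dotProduct, Matrix.mulVec, Matrix.transpose_apply, Pi.star_apply,
    star_star, dotProduct, Finset.mul_sum]
  rw [Finset.sum_comm]
  exact Finset.sum_congr rfl fun j _ => Finset.sum_congr rfl fun i _ => by ring

lemma aux_star_star_dot {m : Type*} [Fintype m] (x : m → ℂ) :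
    star (star x) ⬝ᵥ star x = star x ⬝ᵥ x := by
  simp [dotProduct, mul_comm]

lemma aux_conj_diag_psd {H : Matrix n n ℂ} (hH : H.IsHermitian) (g : n → ℝ)
    (hg : ∀ i, 0 ≤ g i) :
    Matrix.PosSemidef ((hH.eigenvectorUnitary : Matrix n n ℂ) *
      Matrix.diagonal (fun i => (g i : ℂ)) * star (hH.eigenvectorUnitary : Matrix n n ℂ)) := by
  rw [Matrix.star_eq_conjTranspose]
  exact (Matrix.posSemidef_diagonal_iff.mpr fun i =>
    Complex.zero_le_real.mpr (hg i)).mul_mul_conjTranspose_same _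

lemma aux_UUh {H : Matrix n n ℂ} (hH : H.IsHermitian) :
    (hH.eigenvectorUnitary : Matrix n n ℂ) * star (hH.eigenvectorUnitary : Matrix n n ℂ) = 1 :=
  Matrix.mem_unitaryGroup_iff.mp hH.eigenvectorUnitary.2

lemma aux_psd_of_le {H : Matrix n n ℂ} (hH : H.IsHermitian) {b : ℝ}
    (hb : ∀ i, hH.eigenvalues i ≤ b) :
    ((b : ℂ) • (1 : Matrix n n ℂ) - H).PosSemidef := by
  have h1 : (b : ℂ) • (1 : Matrix n n ℂ) - H
      = (hH.eigenvectorUnitary : Matrix n n ℂ) *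
        Matrix.diagonal (fun i => ((b - hH.eigenvalues i : ℝ) : ℂ)) *
        star (hH.eigenvectorUnitary : Matrix n n ℂ) := by
    have hd : Matrix.diagonal (fun i => ((b - hH.eigenvalues i : ℝ) : ℂ))
        = (b : ℂ) • 1 - Matrix.diagonal (RCLike.ofReal ∘ hH.eigenvalues) := by
      simp only [Complex.ofReal_sub]
      rw [Matrix.smul_one_eq_diagonal, ← Matrix.diagonal_sub]
      rfl
    have hs := hH.spectral_theorem
    rw [Unitary.conjStarAlgAut_apply] at hs
    rw [hd, Matrix.mul_sub, Matrix.sub_mul, ← hs]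
    congr 1
    rw [mul_smul_comm, Matrix.mul_one, smul_mul_assoc, aux_UUh hH]
  rw [h1]
  exact aux_conj_diag_psd hH _ fun i => sub_nonneg.mpr (hb i)

lemma aux_psd_of_ge {H : Matrix n n ℂ} (hH : H.IsHermitian) {a : ℝ}
    (ha : ∀ i, a ≤ hH.eigenvalues i) :
    (H - (a : ℂ) • (1 : Matrix n n ℂ)).PosSemidef := by
  have h1 : H - (a : ℂ) • (1 : Matrix n n ℂ)
      = (hH.eigenvectorUnitary : Matrix n n ℂ) *
        Matrix.diagonal (fun i => ((hH.eigenvalues i - a : ℝ) : ℂ)) *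
        star (hH.eigenvectorUnitary : Matrix n n ℂ) := by
    have hd : Matrix.diagonal (fun i => ((hH.eigenvalues i - a : ℝ) : ℂ))
        = Matrix.diagonal (RCLike.ofReal ∘ hH.eigenvalues) - (a : ℂ) • 1 := by
      simp only [Complex.ofReal_sub]
      rw [Matrix.smul_one_eq_diagonal, ← Matrix.diagonal_sub]
      rfl
    have hs := hH.spectral_theorem
    rw [Unitary.conjStarAlgAut_apply] at hs
    rw [hd, Matrix.mul_sub, Matrix.sub_mul, ← hs]
    congr 1
    rw [mul_smul_comm, Matrix.mul_one, smul_mul_assoc, aux_UUh hH]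
  rw [h1]
  exact aux_conj_diag_psd hH _ fun i => sub_nonneg.mpr (ha i)

lemma aux_sum_eig {H : Matrix n n ℂ} (hH : H.IsHermitian) :
    ∑ i, (hH.eigenvalues i : ℂ) = H.trace := by
  conv_rhs => rw [hH.spectral_theorem, Unitary.conjStarAlgAut_apply]
  rw [Matrix.trace_mul_cycle,
    Matrix.mem_unitaryGroup_iff'.mp hH.eigenvectorUnitary.2, Matrix.one_mul,
    Matrix.trace_diagonal]
  rfl

/-- Eigenvalue bound for `(Bᵀ)ᴴ (Bᵀ)` from a quadratic-form bound for `B Bᴴ`. -/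
lemma aux_eig_le (B : Matrix n n ℂ) (c : ℝ)
    (hc : ∀ x : n → ℂ, star x ⬝ᵥ ((B * Bᴴ) *ᵥ x) ≤ (c : ℂ) * (star x ⬝ᵥ x)) (i : n) :
    (Matrix.isHermitian_conjTranspose_mul_self Bᵀ).eigenvalues i ≤ c := by
  set hT := Matrix.isHermitian_conjTranspose_mul_self Bᵀ with hTdef
  set v : n → ℂ := ⇑(hT.eigenvectorBasis i) with hvdef
  have hv : (Bᵀᴴ * Bᵀ) *ᵥ v = hT.eigenvalues i • v := hT.mulVec_eigenvectorBasis i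
  have hvn : star v ⬝ᵥ v = 1 := by
    have h1 := hT.eigenvectorBasis.orthonormal.1 i
    have h2 : (inner ℂ (hT.eigenvectorBasis i) (hT.eigenvectorBasis i) : ℂ) = 1 := by
      rw [inner_self_eq_norm_sq_to_K, h1]; norm_num
    rw [EuclideanSpace.inner_eq_star_dotProduct, dotProduct_comm] at h2
    exact h2
  have hTT : Bᵀᴴ * Bᵀ = (B * Bᴴ)ᵀ := by
    rw [Matrix.transpose_mul]
    congr 1
  have h0 : (hT.eigenvalues i : ℂ) = star v ⬝ᵥ ((Bᵀᴴ * Bᵀ) *ᵥ v) := by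
    rw [hv, dotProduct_smul, hvn, Complex.real_smul, mul_one]
  have h1 : (hT.eigenvalues i : ℂ) ≤ (c : ℂ) := by
    rw [h0, hTT, aux_quad_transpose]
    calc star (star v) ⬝ᵥ ((B * Bᴴ) *ᵥ star v)
        ≤ (c : ℂ) * (star (star v) ⬝ᵥ star v) := hc (star v)
      _ = (c : ℂ) := by rw [aux_star_star_dot, hvn, mul_one]
  exact_mod_cast h1

end Aux

/-- A purification of a state on `A = Fin dA` with reference `R = Fin dR` is identified with its
coefficient matrix `M : Matrix (Fin dA) (Fin dR) ℂ`, i.e. `|ψ⟩ = ∑_{a,r} M a r |a⟩|r⟩`;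
the reduced state is then `Tr_R |ψ⟩⟨ψ| = M Mᴴ`, and `(𝟙_A ⊗ T)|ψ⟩` has coefficient
matrix `M * Tᵀ`.

**Statement.** If `ρ = M Mᴴ` is a density matrix of full rank with minimum eigenvalue
`λmin > 0`, then every purification (coefficient matrix `N`) of any density matrix
`σ = N Nᴴ` on `A` is of the form `(𝟙_A ⊗ T)|ψ⟩` for an operator `T` on `R` with
`‖T‖_∞ ≤ 1/√λmin`. -/
theorem purification_of_other_state {dA dR : ℕ}
    (M : Matrix (Fin dA) (Fin dR) ℂ) (hM : (M * Mᴴ).trace = 1)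
    (lamMin : ℝ) (hpos : 0 < lamMin)
    (hmin : ∀ i, lamMin ≤ (Matrix.isHermitian_mul_conjTranspose_self M).eigenvalues i)
    (N : Matrix (Fin dA) (Fin dR) ℂ) (hN : (N * Nᴴ).trace = 1) :
    ∃ T : Matrix (Fin dR) (Fin dR) ℂ,
      opNorm T ≤ 1 / Real.sqrt lamMin ∧ N = M * Tᵀ := by
  have hρH : (M * Mᴴ).IsHermitian := Matrix.isHermitian_mul_conjTranspose_self M
  have hNH : (N * Nᴴ).IsHermitian := Matrix.isHermitian_mul_conjTranspose_self N
  -- invertibility of ρ = M Mᴴ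
  have hdet : IsUnit (M * Mᴴ).det := by
    rw [hρH.det_eq_prod_eigenvalues]
    refine isUnit_iff_ne_zero.mpr (Finset.prod_ne_zero_iff.mpr fun i _ => ?_)
    exact Complex.ofReal_ne_zero.mpr (lt_of_lt_of_le hpos (hmin i)).ne'
  have hinv1 : (M * Mᴴ) * (M * Mᴴ)⁻¹ = 1 := Matrix.mul_nonsing_inv _ hdet
  have hinv2 : (M * Mᴴ)⁻¹ * (M * Mᴴ) = 1 := Matrix.nonsing_inv_mul _ hdet
  have hinvH : ((M * Mᴴ)⁻¹)ᴴ = (M * Mᴴ)⁻¹ := by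
    rw [Matrix.conjTranspose_nonsing_inv, hρH.eq]
  have hMM : (M * Mᴴ) * ((M * Mᴴ)⁻¹ * M) = M := by
    rw [← Matrix.mul_assoc, hinv1, Matrix.one_mul]
  -- eigenvalues of N Nᴴ are at most 1
  have hnn : ∀ j, 0 ≤ hNH.eigenvalues j :=
    fun j => (Matrix.posSemidef_self_mul_conjTranspose N).eigenvalues_nonneg j
  have hsumR : ∑ j, hNH.eigenvalues j = 1 := by
    have := aux_sum_eig hNH
    rw [hN] at this
    exact_mod_cast this
  have hle1 : ∀ j, hNH.eigenvalues j ≤ (1 : ℝ) := fun j =>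
    hsumR ▸ Finset.single_le_sum (fun k _ => hnn k) (Finset.mem_univ j)
  -- the operator T
  refine ⟨(Mᴴ * (M * Mᴴ)⁻¹ * N)ᵀ, ?_, ?_⟩
  · -- norm bound
    by_cases hne : Nonempty (Fin dR)
    · -- quadratic form bound for S Sᴴ
      have hquad : ∀ x : Fin dR → ℂ,
          star x ⬝ᵥ (((Mᴴ * (M * Mᴴ)⁻¹ * N) * (Mᴴ * (M * Mᴴ)⁻¹ * N)ᴴ) *ᵥ x)
            ≤ ((1 / lamMin : ℝ) : ℂ) * (star x ⬝ᵥ x) := by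
        intro u
        set y : Fin dA → ℂ := ((M * Mᴴ)⁻¹ * M) *ᵥ u with hydef
        have hSS : (Mᴴ * (M * Mᴴ)⁻¹ * N) * (Mᴴ * (M * Mᴴ)⁻¹ * N)ᴴ
            = ((M * Mᴴ)⁻¹ * M)ᴴ * (N * Nᴴ) * ((M * Mᴴ)⁻¹ * M) := by
          simp only [Matrix.conjTranspose_mul, Matrix.conjTranspose_conjTranspose, hinvH,
            Matrix.mul_assoc]
        have h2 : star u ⬝ᵥ (((Mᴴ * (M * Mᴴ)⁻¹ * N) * (Mᴴ * (M * Mᴴ)⁻¹ * N)ᴴ) *ᵥ u)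
            = star y ⬝ᵥ ((N * Nᴴ) *ᵥ y) := by
          rw [hSS, aux_quad_conj]
        have h3 : star y ⬝ᵥ ((N * Nᴴ) *ᵥ y) ≤ star y ⬝ᵥ y := by
          have hp := (aux_psd_of_le hNH hle1).dotProduct_mulVec_nonneg y
          simp only [Complex.ofReal_one, one_smul, Matrix.sub_mulVec, Matrix.one_mulVec,
            dotProduct_sub] at hp
          exact sub_nonneg.mp hp
        have h4 : (lamMin : ℂ) * (star y ⬝ᵥ y) ≤ star y ⬝ᵥ ((M * Mᴴ) *ᵥ y) := by
          have hp := (aux_psd_of_ge hρH hmin).dotProduct_mulVec_nonneg y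
          simp only [Matrix.sub_mulVec, Matrix.smul_mulVec, Matrix.one_mulVec,
            dotProduct_sub, dotProduct_smul, smul_eq_mul] at hp
          exact sub_nonneg.mp hp
        have h5 : star y ⬝ᵥ ((M * Mᴴ) *ᵥ y)
            = star u ⬝ᵥ ((((M * Mᴴ)⁻¹ * M)ᴴ * (M * Mᴴ) * ((M * Mᴴ)⁻¹ * M)) *ᵥ u) :=
          (aux_quad_conj _ _ _).symm
        have h6 : ((M * Mᴴ)⁻¹ * M)ᴴ * (M * Mᴴ) * ((M * Mᴴ)⁻¹ * M)
            = Mᴴ * (M * Mᴴ)⁻¹ * M := by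
          rw [Matrix.conjTranspose_mul, hinvH, Matrix.mul_assoc, hMM]
        have hPH : (Mᴴ * (M * Mᴴ)⁻¹ * M)ᴴ = Mᴴ * (M * Mᴴ)⁻¹ * M := by
          simp only [Matrix.conjTranspose_mul, Matrix.conjTranspose_conjTranspose, hinvH,
            Matrix.mul_assoc]
        have hPP : (Mᴴ * (M * Mᴴ)⁻¹ * M) * (Mᴴ * (M * Mᴴ)⁻¹ * M)
            = Mᴴ * (M * Mᴴ)⁻¹ * M := by
          calc (Mᴴ * (M * Mᴴ)⁻¹ * M) * (Mᴴ * (M * Mᴴ)⁻¹ * M)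
              = Mᴴ * (M * Mᴴ)⁻¹ * ((M * Mᴴ) * ((M * Mᴴ)⁻¹ * M)) := by
                simp only [Matrix.mul_assoc]
            _ = Mᴴ * (M * Mᴴ)⁻¹ * M := by rw [hMM]
        have hPpsd : ((1 : Matrix (Fin dR) (Fin dR) ℂ) - Mᴴ * (M * Mᴴ)⁻¹ * M).PosSemidef := by
          have hid : (1 : Matrix (Fin dR) (Fin dR) ℂ) - Mᴴ * (M * Mᴴ)⁻¹ * M
              = ((1 : Matrix (Fin dR) (Fin dR) ℂ) - Mᴴ * (M * Mᴴ)⁻¹ * M) *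
                ((1 : Matrix (Fin dR) (Fin dR) ℂ) - Mᴴ * (M * Mᴴ)⁻¹ * M)ᴴ := by
            rw [Matrix.conjTranspose_sub, Matrix.conjTranspose_one, hPH, Matrix.sub_mul,
              Matrix.one_mul, Matrix.mul_sub, Matrix.mul_one, hPP]
            abel
          rw [hid]
          exact Matrix.posSemidef_self_mul_conjTranspose _
        have h7 : star u ⬝ᵥ ((Mᴴ * (M * Mᴴ)⁻¹ * M) *ᵥ u) ≤ star u ⬝ᵥ u := by
          have hp := hPpsd.dotProduct_mulVec_nonneg u
          simp only [Matrix.sub_mulVec, Matrix.one_mulVec, dotProduct_sub] at hp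
          exact sub_nonneg.mp hp
        -- combine
        have hA : star u ⬝ᵥ (((Mᴴ * (M * Mᴴ)⁻¹ * N) * (Mᴴ * (M * Mᴴ)⁻¹ * N)ᴴ) *ᵥ u)
            ≤ star y ⬝ᵥ y := h2 ▸ h3
        have hB : (lamMin : ℂ) * (star y ⬝ᵥ y) ≤ star u ⬝ᵥ u := by
          calc (lamMin : ℂ) * (star y ⬝ᵥ y) ≤ star y ⬝ᵥ ((M * Mᴴ) *ᵥ y) := h4
            _ = star u ⬝ᵥ ((Mᴴ * (M * Mᴴ)⁻¹ * M) *ᵥ u) := by rw [h5, h6]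
            _ ≤ star u ⬝ᵥ u := h7
        have hcinv : (0 : ℂ) ≤ ((1 / lamMin : ℝ) : ℂ) :=
          Complex.zero_le_real.mpr (by positivity)
        calc star u ⬝ᵥ (((Mᴴ * (M * Mᴴ)⁻¹ * N) * (Mᴴ * (M * Mᴴ)⁻¹ * N)ᴴ) *ᵥ u)
            ≤ star y ⬝ᵥ y := hA
          _ = ((1 / lamMin : ℝ) : ℂ) * ((lamMin : ℂ) * (star y ⬝ᵥ y)) := by
              rw [← mul_assoc, ← Complex.ofReal_mul, one_div, inv_mul_cancel₀ hpos.ne',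
                Complex.ofReal_one, one_mul]
          _ ≤ ((1 / lamMin : ℝ) : ℂ) * (star u ⬝ᵥ u) :=
              mul_le_mul_of_nonneg_left hB hcinv
      have hkey : ∀ i, (Matrix.isHermitian_conjTranspose_mul_self
          (Mᴴ * (M * Mᴴ)⁻¹ * N)ᵀ).eigenvalues i ≤ 1 / lamMin :=
        aux_eig_le _ _ hquad
      rw [opNorm]
      refine ciSup_le fun i => ?_
      rw [singVals]
      calc Real.sqrt ((Matrix.isHermitian_conjTranspose_mul_self
            (Mᴴ * (M * Mᴴ)⁻¹ * N)ᵀ).eigenvalues i)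
          ≤ Real.sqrt (1 / lamMin) := Real.sqrt_le_sqrt (hkey i)
        _ = 1 / Real.sqrt lamMin := by rw [one_div, one_div, Real.sqrt_inv]
    · haveI := not_nonempty_iff.mp hne
      rw [opNorm, Real.iSup_of_isEmpty]
      positivity
  · rw [Matrix.transpose_transpose, ← Matrix.mul_assoc, ← Matrix.mul_assoc, hinv1,
      Matrix.one_mul]
end

section
/- If a density matrix ρ with spectral decomposition ρ = Σ_j p_j π_j onto rank-one projectors π_j satisfies Tr(ρΛ) ≥ 1 − ε for an operator 0 ≤ Λ ≤ 𝟙, then Σ_j p_j ‖π_j − √Λ π_j √Λ‖₁ ≤ 2√ε (Gentle Operator Lemma). -/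
open Matrix
open scoped Classical ComplexOrder

/-- The square root of a positive semidefinite matrix, as `Matrix.PosSemidef.sqrt` was defined in
the older Mathlib (it has since been removed). -/
noncomputable def Matrix.PosSemidef.sqrt {n 𝕜 : Type*} [Fintype n] [RCLike 𝕜] [DecidableEq n]
    {A : Matrix n n 𝕜} (hA : Matrix.PosSemidef A) : Matrix n n 𝕜 :=
  hA.1.eigenvectorUnitary.1 * diagonal ((↑) ∘ (√·) ∘ hA.1.eigenvalues) *
    (star hA.1.eigenvectorUnitary : Matrix n n 𝕜)

/-- The trace norm `‖X‖₁`, the sum of the singular values. -/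
noncomputable def traceNorm {m n : Type*} [Fintype m] [Fintype n] [DecidableEq n]
    (X : Matrix m n ℂ) : ℝ := ∑ i, singVals X i

section Helpers
variable {n : Type*} [Fintype n] [DecidableEq n]
set_option linter.unusedSectionVars false

lemma trace_eq_sum_eigs {A : Matrix n n ℂ} (hA : A.IsHermitian) :
    A.trace = ∑ i, (hA.eigenvalues i : ℂ) := by
  conv_lhs => rw [hA.spectral_theorem]
  rw [Unitary.conjStarAlgAut_apply, Matrix.trace_mul_comm, ← mul_assoc, Unitary.coe_star_mul_self, one_mul, trace_diagonal]
  simp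

lemma spec_eq' {A : Matrix n n ℂ} (hA : A.IsHermitian) :
    A = (hA.eigenvectorUnitary : Matrix n n ℂ) * diagonal ((↑) ∘ hA.eigenvalues) *
      star (hA.eigenvectorUnitary : Matrix n n ℂ) :=
  hA.spectral_theorem

lemma Matrix.PosSemidef.posSemidef_sqrt' {A : Matrix n n ℂ} (hA : A.PosSemidef) :
    hA.sqrt.PosSemidef := by
  unfold Matrix.PosSemidef.sqrt
  refine (posSemidef_diagonal_iff.mpr fun i => ?_).mul_mul_conjTranspose_same _
  exact Complex.zero_le_real.mpr (Real.sqrt_nonneg _)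

lemma Matrix.PosSemidef.sqrt_mul_self' {A : Matrix n n ℂ} (hA : A.PosSemidef) :
    hA.sqrt * hA.sqrt = A := by
  unfold Matrix.PosSemidef.sqrt
  set U : Matrix n n ℂ := (hA.1.eigenvectorUnitary : Matrix n n ℂ) with hU
  have hUU : star U * U = 1 := Unitary.coe_star_mul_self _
  rw [show ∀ D : Matrix n n ℂ, U * D * star U * (U * D * star U) = U * (D * (star U * U) * D) * star U
    from fun D => by simp only [mul_assoc]]
  rw [hUU, mul_one, diagonal_mul_diagonal]
  conv_rhs => rw [spec_eq' hA.1]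
  congr 1; congr 1; congr 1
  funext i
  simp only [Function.comp_apply]
  change Complex.ofReal (Real.sqrt (hA.1.eigenvalues i)) * Complex.ofReal (Real.sqrt (hA.1.eigenvalues i))
    = Complex.ofReal (hA.1.eigenvalues i)
  rw [← Complex.ofReal_mul, Real.mul_self_sqrt (hA.eigenvalues_nonneg i)]

lemma mul_vecMulVec (A : Matrix n n ℂ) (u w : n → ℂ) :
    A * vecMulVec u w = vecMulVec (A *ᵥ u) w := by
  ext i j
  simp [vecMulVec_apply, mul_apply, mulVec, dotProduct, Finset.sum_mul, mul_assoc]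

lemma vecMulVec_mul (u w : n → ℂ) (A : Matrix n n ℂ) :
    vecMulVec u w * A = vecMulVec u (w ᵥ* A) := by
  ext i j
  simp [vecMulVec_apply, mul_apply, vecMul, dotProduct, Finset.mul_sum, mul_assoc]

lemma mulVec_vecMulVec (u w x : n → ℂ) : vecMulVec u w *ᵥ x = (w ⬝ᵥ x) • u := by
  ext i
  simp [vecMulVec_apply, mulVec, dotProduct, Finset.sum_mul, Finset.mul_sum]
  congr 1; ext j; ring

lemma trace_vecMulVec_mul (u w : n → ℂ) (X : Matrix n n ℂ) :
    (vecMulVec u w * X).trace = w ⬝ᵥ (X *ᵥ u) := by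
  rw [trace_mul_comm]
  simp only [Matrix.trace, Matrix.diag, mul_apply, vecMulVec_apply, dotProduct, mulVec]
  congr 1; ext i; rw [Finset.mul_sum]; congr 1; ext j; ring

lemma trace_vecMulVec_mul_vecMulVec (a b c e : n → ℂ) :
    (vecMulVec a b * vecMulVec c e).trace = (b ⬝ᵥ c) * (e ⬝ᵥ a) := by
  rw [trace_vecMulVec_mul, mulVec_vecMulVec, dotProduct_smul, smul_eq_mul, mul_comm]

lemma rank_vecMulVec_le (u w : n → ℂ) : (vecMulVec u w).rank ≤ 1 := by
  rw [vecMulVec_eq (Fin 1)]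
  exact (Matrix.rank_mul_le_left _ _).trans
    ((Matrix.rank_le_card_width _).trans (by simp))

lemma matrix_rank_add_le (A B : Matrix n n ℂ) : (A + B).rank ≤ A.rank + B.rank := by
  have h : LinearMap.range (A + B).mulVecLin ≤
      LinearMap.range A.mulVecLin ⊔ LinearMap.range B.mulVecLin := by
    rintro x ⟨y, rfl⟩
    simp only [mulVecLin_apply, add_mulVec]
    exact Submodule.add_mem_sup ⟨y, rfl⟩ ⟨y, rfl⟩
  have h2 := Submodule.finrank_mono (R := ℂ) (M := n → ℂ) h
  exact h2.trans (Submodule.finrank_add_le_finrank_add_finrank _ _)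

lemma neg_vecMulVec (u w : n → ℂ) : vecMulVec (-u) w = -vecMulVec u w := by
  ext i j; simp [vecMulVec_apply]

lemma isHermitian_vecMulVec_self (u : n → ℂ) :
    (vecMulVec u (star u)).IsHermitian := by
  ext i j
  simp [conjTranspose_apply, vecMulVec_apply, mul_comm]

lemma traceNorm_le_sqrt_rank {X : Matrix n n ℂ} {r : ℕ} (h : X.rank ≤ r) :
    traceNorm X ≤ Real.sqrt (r * ((Xᴴ * X).trace.re)) := by
  have hH := Matrix.isHermitian_conjTranspose_mul_self X
  set μ : n → ℝ := hH.eigenvalues with hμ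
  have hμ0 : ∀ i, 0 ≤ μ i := fun i =>
    (Matrix.posSemidef_conjTranspose_mul_self X).eigenvalues_nonneg i
  have htr : ((Xᴴ * X).trace).re = ∑ i, μ i := by
    rw [trace_eq_sum_eigs hH]; simp [hμ]
  set s : Finset n := Finset.univ.filter (fun i => μ i ≠ 0) with hs
  have hcard : s.card ≤ r := by
    have h1 := hH.rank_eq_card_non_zero_eigs
    rw [Matrix.rank_conjTranspose_mul_self] at h1
    rw [← hμ] at h1
    rw [hs, ← Fintype.card_subtype]
    omega
  have hsum : traceNorm X = ∑ i ∈ s, Real.sqrt (μ i) := by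
    rw [traceNorm]
    refine (Finset.sum_filter_of_ne fun i _ hne => ?_).symm
    intro h0
    exact hne (by simp only [singVals, ← hμ, h0, Real.sqrt_zero])
  have key : (∑ i ∈ s, Real.sqrt (μ i)) ^ 2 ≤ r * ∑ i, μ i := by
    calc (∑ i ∈ s, Real.sqrt (μ i)) ^ 2 ≤ s.card * ∑ i ∈ s, (Real.sqrt (μ i)) ^ 2 :=
          sq_sum_le_card_mul_sum_sq
      _ = s.card * ∑ i ∈ s, μ i := by
          congr 1; exact Finset.sum_congr rfl fun i _ => Real.sq_sqrt (hμ0 i)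
      _ ≤ r * ∑ i, μ i := by
          refine mul_le_mul (by exact_mod_cast hcard)
            (Finset.sum_le_sum_of_subset_of_nonneg (Finset.filter_subset _ _)
              fun i _ _ => hμ0 i)
            (Finset.sum_nonneg fun i _ => hμ0 i) (by positivity)
  rw [hsum, htr]
  have h0 : 0 ≤ ∑ i ∈ s, Real.sqrt (μ i) := Finset.sum_nonneg fun i _ => Real.sqrt_nonneg _
  exact (Real.le_sqrt h0
    (mul_nonneg (Nat.cast_nonneg r) (Finset.sum_nonneg fun i _ => hμ0 i))).mpr key

lemma eigs_le_one {A : Matrix n n ℂ} (hA : A.IsHermitian) (h1 : (1 - A).PosSemidef) (i : n) :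
    hA.eigenvalues i ≤ 1 := by
  set u : n → ℂ := ⇑(hA.eigenvectorBasis i) with hu'
  have hu : star u ⬝ᵥ u = 1 := by
    have hn := hA.eigenvectorBasis.orthonormal.1 i
    have h2 : (inner ℂ (hA.eigenvectorBasis i) (hA.eigenvectorBasis i) : ℂ) = 1 := by
      rw [inner_self_eq_norm_sq_to_K, hn]; norm_num
    rwa [EuclideanSpace.inner_eq_star_dotProduct, dotProduct_comm] at h2
  have h2 := h1.dotProduct_mulVec_nonneg u
  rw [sub_mulVec, one_mulVec, dotProduct_sub, hu] at h2
  have h3 := (RCLike.nonneg_iff.mp h2).1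
  rw [map_sub] at h3
  rw [RCLike.one_re] at h3
  have h4 : RCLike.re (star u ⬝ᵥ (A *ᵥ u)) ≤ 1 := by linarith
  rw [hA.eigenvalues_eq]
  exact h4

lemma sqrt_sub_posSemidef {Λ : Matrix n n ℂ} (hΛ : Λ.PosSemidef)
    (hΛ1 : (1 - Λ).PosSemidef) : (hΛ.sqrt - Λ).PosSemidef := by
  set U : Matrix n n ℂ := (hΛ.1.eigenvectorUnitary : Matrix n n ℂ) with hU
  have hent : ∀ i, (0:ℂ) ≤ ((Real.sqrt (hΛ.1.eigenvalues i) - hΛ.1.eigenvalues i : ℝ) : ℂ) := by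
    intro i
    rw [Complex.zero_le_real, sub_nonneg]
    have h0 := hΛ.eigenvalues_nonneg i
    have h1 := eigs_le_one hΛ.1 hΛ1 i
    exact (Real.le_sqrt h0 h0).mpr (by nlinarith)
  have key : hΛ.sqrt - Λ =
      U * diagonal (fun i => ((Real.sqrt (hΛ.1.eigenvalues i) - hΛ.1.eigenvalues i : ℝ) : ℂ)) *
        Uᴴ := by
    have h1 : hΛ.sqrt = U * diagonal ((↑) ∘ Real.sqrt ∘ hΛ.1.eigenvalues) * star U := rfl
    have h2 := spec_eq' hΛ.1
    have step : hΛ.sqrt - Λ = U * diagonal ((↑) ∘ Real.sqrt ∘ hΛ.1.eigenvalues) * star U -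
        U * diagonal ((↑) ∘ hΛ.1.eigenvalues) * star U := by
      rw [h1]; congr 1
    rw [step, ← Matrix.star_eq_conjTranspose, ← sub_mul, ← mul_sub, diagonal_sub]
    congr 1
    congr 1
    funext i
    simp [Complex.ofReal_sub]
  rw [key]
  exact (posSemidef_diagonal_iff.mpr hent).mul_mul_conjTranspose_same _

end Helpers

/-- **Gentle Operator Lemma.** If a density matrix `ρ = ∑ j p j • π j` (spectral decomposition
into rank-one projectors `π j = |v j⟩⟨v j|` onto an orthonormal basis) satisfies
`Tr(ρ Λ) ≥ 1 - ε` for an operator `0 ≤ Λ ≤ 𝟙`, then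
`∑ j p j ‖π j - √Λ π j √Λ‖₁ ≤ 2 √ε`. -/
theorem gentle_operator {d : ℕ} (p : Fin d → ℝ) (v : Fin d → (Fin d → ℂ))
    (hp : ∀ j, 0 ≤ p j) (hp1 : ∑ j, p j = 1)
    (hortho : ∀ i j, star (v i) ⬝ᵥ v j = if i = j then 1 else 0)
    (π : Fin d → Matrix (Fin d) (Fin d) ℂ)
    (hπ : ∀ j, π j = Matrix.vecMulVec (v j) (star (v j)))
    (ρ : Matrix (Fin d) (Fin d) ℂ) (hρ : ρ = ∑ j, (p j : ℂ) • π j)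
    (Λ : Matrix (Fin d) (Fin d) ℂ) (hΛ : Λ.PosSemidef) (hΛ1 : (1 - Λ).PosSemidef)
    (ε : ℝ) (hε : 0 ≤ ε) (htr : 1 - ε ≤ ((ρ * Λ).trace).re) :
    ∑ j, p j * traceNorm (π j - hΛ.sqrt * π j * hΛ.sqrt) ≤ 2 * Real.sqrt ε := by
  set B : Matrix (Fin d) (Fin d) ℂ := hΛ.sqrt with hBdef
  have hB : B.PosSemidef := hΛ.posSemidef_sqrt'
  have hBH : Bᴴ = B := hB.1
  have hBB : B * B = Λ := hΛ.sqrt_mul_self'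
  -- vectors and quadratic forms
  set w : Fin d → (Fin d → ℂ) := fun j => B *ᵥ v j with hw
  set a : Fin d → ℂ := fun j => star (v j) ⬝ᵥ (B *ᵥ v j) with ha
  set b : Fin d → ℂ := fun j => star (v j) ⬝ᵥ (Λ *ᵥ v j) with hb
  have hvj : ∀ j, star (v j) ⬝ᵥ v j = 1 := fun j => by simpa using hortho j j
  have hstarw : ∀ j, star (w j) = star (v j) ᵥ* B := by
    intro j; rw [hw]; rw [star_mulVec, hBH]
  have hwv : ∀ j, star (w j) ⬝ᵥ v j = a j := by
    intro j; rw [hstarw, ← dotProduct_mulVec]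
  have hww : ∀ j, star (w j) ⬝ᵥ w j = b j := by
    intro j
    rw [hstarw, hw]
    simp only []
    rw [← dotProduct_mulVec, mulVec_mulVec, hBB]
  -- per-j quantities
  have hQ : ∀ j, B * π j * B = vecMulVec (w j) (star (w j)) := by
    intro j
    rw [hπ j, _root_.mul_vecMulVec, _root_.vecMulVec_mul, ← hstarw, hw]
  have hMsum : ∀ j, π j - B * π j * B =
      vecMulVec (v j) (star (v j)) + vecMulVec (-(w j)) (star (w j)) := by
    intro j
    rw [_root_.neg_vecMulVec, hQ j, hπ j]
    rw [sub_eq_add_neg]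
  -- reality and inequalities for a, b
  have haR : ∀ j, a j = ((a j).re : ℂ) := by
    intro j
    have h0 : (0:ℂ) ≤ a j := hB.dotProduct_mulVec_nonneg (v j)
    have him := (Complex.nonneg_iff.mp h0).2
    exact Complex.ext_iff.mpr ⟨by simp, by simp [← him]⟩
  have hbR : ∀ j, b j = ((b j).re : ℂ) := by
    intro j
    have h0 : (0:ℂ) ≤ b j := hΛ.dotProduct_mulVec_nonneg (v j)
    have him := (Complex.nonneg_iff.mp h0).2
    exact Complex.ext_iff.mpr ⟨by simp, by simp [← him]⟩
  have har0 : ∀ j, 0 ≤ (a j).re := fun j => (Complex.nonneg_iff.mp (hB.dotProduct_mulVec_nonneg (v j))).1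
  have hbr0 : ∀ j, 0 ≤ (b j).re := fun j => (Complex.nonneg_iff.mp (hΛ.dotProduct_mulVec_nonneg (v j))).1
  have hbr1 : ∀ j, (b j).re ≤ 1 := by
    intro j
    have h2 := hΛ1.dotProduct_mulVec_nonneg (v j)
    rw [sub_mulVec, one_mulVec, dotProduct_sub, hvj j] at h2
    have h3 := (Complex.nonneg_iff.mp h2).1
    rw [Complex.sub_re, Complex.one_re] at h3
    linarith
  have hab : ∀ j, (b j).re ≤ (a j).re := by
    intro j
    have h2 := (sqrt_sub_posSemidef hΛ hΛ1).dotProduct_mulVec_nonneg (v j)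
    rw [sub_mulVec, dotProduct_sub] at h2
    have h3 := (Complex.nonneg_iff.mp h2).1
    rw [Complex.sub_re] at h3
    linarith
  -- trace of M j squared
  have htrM : ∀ j, ((π j - B * π j * B)ᴴ * (π j - B * π j * B)).trace.re =
      1 - 2 * (a j).re ^ 2 + (b j).re ^ 2 := by
    intro j
    have hMH : (π j - B * π j * B).IsHermitian := by
      rw [hQ j, hπ j]
      exact (isHermitian_vecMulVec_self _).sub (isHermitian_vecMulVec_self _)
    rw [hMH.eq]
    have expand : (π j - B * π j * B) * (π j - B * π j * B) =
        π j * π j - π j * (B * π j * B) - (B * π j * B) * π j +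
          (B * π j * B) * (B * π j * B) := by noncomm_ring
    rw [expand]
    rw [trace_add, trace_sub, trace_sub]
    rw [hQ j, hπ j]
    rw [trace_vecMulVec_mul_vecMulVec, trace_vecMulVec_mul_vecMulVec,
      trace_vecMulVec_mul_vecMulVec, trace_vecMulVec_mul_vecMulVec]
    rw [hvj j, hwv j, hww j]
    rw [show star (v j) ⬝ᵥ w j = a j from rfl]
    have : (1:ℂ) * 1 - a j * a j - a j * a j + b j * b j =
        ((1 - 2 * (a j).re ^ 2 + (b j).re ^ 2 : ℝ) : ℂ) := by
      rw [haR j, hbR j]; simp only [Complex.ofReal_re]; push_cast; ring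
    rw [this, Complex.ofReal_re]
  -- rank bound
  have hrank : ∀ j, (π j - B * π j * B).rank ≤ 2 := by
    intro j
    rw [hMsum j]
    exact (matrix_rank_add_le _ _).trans
      (add_le_add (_root_.rank_vecMulVec_le _ _) (_root_.rank_vecMulVec_le _ _))
  -- per-j trace norm bound
  set e : Fin d → ℝ := fun j => 1 - (b j).re with he
  have he0 : ∀ j, 0 ≤ e j := fun j => by simp [he]; linarith [hbr1 j]
  have hTN : ∀ j, traceNorm (π j - B * π j * B) ≤ 2 * Real.sqrt (e j) := by
    intro j
    have h1 := traceNorm_le_sqrt_rank (hrank j)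
    have h2 : ((2:ℕ) : ℝ) * (((π j - B * π j * B)ᴴ * (π j - B * π j * B)).trace.re) ≤
        4 * e j := by
      rw [htrM j]
      have h3 := hab j; have h4 := har0 j; have h5 := hbr0 j; have h6 := hbr1 j
      push_cast
      simp only [he]
      nlinarith [sq_nonneg ((a j).re - (b j).re), sq_nonneg ((a j).re + (b j).re)]
    calc traceNorm (π j - B * π j * B) ≤ _ := h1
      _ ≤ Real.sqrt (4 * e j) := Real.sqrt_le_sqrt h2
      _ = 2 * Real.sqrt (e j) := by
          rw [show (4:ℝ) * e j = 2^2 * e j by ring, Real.sqrt_mul (by positivity),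
            Real.sqrt_sq (by norm_num)]
  -- global sum
  have hsum_b : ((ρ * Λ).trace).re = ∑ j, p j * (b j).re := by
    have h1 : (ρ * Λ).trace = ∑ j, (p j : ℂ) * b j := by
      rw [hρ, Finset.sum_mul, trace_sum]
      refine Finset.sum_congr rfl fun j _ => ?_
      rw [smul_mul_assoc, trace_smul, smul_eq_mul]
      congr 1
      rw [hπ j, trace_vecMulVec_mul]
    rw [h1, Complex.re_sum]
    refine Finset.sum_congr rfl fun j _ => ?_
    rw [hbR j, ← Complex.ofReal_mul]
    simp
  have hpe : ∑ j, p j * e j ≤ ε := by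
    have : ∑ j, p j * e j = 1 - ∑ j, p j * (b j).re := by
      simp only [he, mul_sub, mul_one, Finset.sum_sub_distrib, hp1]
    rw [this, ← hsum_b]
    linarith
  have hCS : ∑ j, p j * Real.sqrt (e j) ≤ Real.sqrt ε := by
    have h0 : 0 ≤ ∑ j, p j * Real.sqrt (e j) :=
      Finset.sum_nonneg fun j _ => mul_nonneg (hp j) (Real.sqrt_nonneg _)
    rw [Real.le_sqrt h0 hε]
    calc (∑ j, p j * Real.sqrt (e j)) ^ 2 ≤ (∑ j, p j) * ∑ j, p j * e j := by
          refine Finset.sum_sq_le_sum_mul_sum_of_sq_eq_mul _ (fun j _ => hp j)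
            (fun j _ => mul_nonneg (hp j) (he0 j)) (fun j _ => ?_)
          rw [mul_pow, Real.sq_sqrt (he0 j)]
          ring
      _ ≤ ε := by rw [hp1, one_mul]; exact hpe
  calc ∑ j, p j * traceNorm (π j - B * π j * B)
      ≤ ∑ j, p j * (2 * Real.sqrt (e j)) :=
        Finset.sum_le_sum fun j _ => mul_le_mul_of_nonneg_left (hTN j) (hp j)
    _ = 2 * ∑ j, p j * Real.sqrt (e j) := by
        rw [Finset.mul_sum]; exact Finset.sum_congr rfl fun j _ => by ring
    _ ≤ 2 * Real.sqrt ε := by linarith [hCS]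
end

section
/- Every density matrix ρ on a d-dimensional Hilbert space can be written, for any n ≥ d, as a uniform convex combination of n pure states: ρ = (1/n) Σ_{i=1}^n |ψ_i⟩⟨ψ_i|. -/
open Matrix
open scoped Classical ComplexOrder

set_option maxHeartbeats 2000000

/-- Every density matrix `ρ` on `ℂ^d` can be written, for any `n ≥ d`, as a uniform
convex combination of `n` pure states: `ρ = (1/n) ∑_{i=1}^n |ψ i⟩⟨ψ i|`. -/
theorem density_eq_uniform_mixture_of_pure {d : ℕ} (ρ : Matrix (Fin d) (Fin d) ℂ)
    (hρ : ρ.PosSemidef) (htr : ρ.trace = 1) (n : ℕ) (hn : d ≤ n) :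
    ∃ ψ : Fin n → (Fin d → ℂ),
      (∀ i, star (ψ i) ⬝ᵥ ψ i = 1) ∧
      ρ = ((n : ℂ))⁻¹ • ∑ i, Matrix.vecMulVec (ψ i) (star (ψ i)) := by
  rcases Nat.eq_zero_or_pos n with rfl | hn0
  · exfalso
    have hd : d = 0 := Nat.le_zero.mp hn
    subst hd
    simp [Matrix.trace] at htr
  have hH := hρ.1
  set U : Matrix (Fin d) (Fin d) ℂ := (hH.eigenvectorUnitary : Matrix (Fin d) (Fin d) ℂ) with hUdef
  set lam : Fin d → ℝ := hH.eigenvalues with hlamdef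
  have hlam : ∀ j, 0 ≤ lam j := fun j => hρ.eigenvalues_nonneg j
  have hspec : ρ = U * diagonal (RCLike.ofReal ∘ lam) * Uᴴ := hH.spectral_theorem
  have hUU : star U * U = 1 := Matrix.mem_unitaryGroup_iff'.mp hH.eigenvectorUnitary.2
  -- entrywise unitarity
  have hUentry : ∀ j j' : Fin d,
      (∑ i, (starRingEnd ℂ) (U i j) * U i j') = if j = j' then 1 else 0 := by
    intro j j'
    have := congrFun (congrFun hUU j) j'
    simpa [Matrix.mul_apply, Matrix.conjTranspose_apply, Matrix.one_apply] using this
  -- sum of eigenvalues is 1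
  have hsum : (∑ j, (lam j : ℂ)) = 1 := by
    have h1 : ρ.trace = ∑ j, (lam j : ℂ) := by
      rw [hspec, Matrix.trace_mul_cycle]
      have : Uᴴ * U = 1 := hUU
      rw [this, one_mul, Matrix.trace_diagonal]
      rfl
    rw [← h1, htr]
  -- the primitive root
  set ω : ℂ := Complex.exp (2 * Real.pi * Complex.I / n) with hωdef
  have hprim : IsPrimitiveRoot ω n := Complex.isPrimitiveRoot_exp n hn0.ne'
  have hω1 : ω ^ n = 1 := hprim.pow_eq_one
  have habs : ‖ω‖ = 1 := by
    rw [hωdef, Complex.norm_exp]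
    norm_num [Complex.div_re, Complex.mul_re, Complex.mul_im]
  have hconj : (starRingEnd ℂ) ω = ω⁻¹ := by
    rw [← Complex.inv_eq_conj habs]
  have hωne : ω ≠ 0 := fun h => by simp [h] at habs
  -- orthogonality
  have hkey : ∀ j j' : Fin d,
      (∑ k : Fin n, ω ^ ((k : ℕ) * (j : ℕ)) * (starRingEnd ℂ) (ω ^ ((k : ℕ) * (j' : ℕ))))
        = if j = j' then (n : ℂ) else 0 := by
    intro j j'
    have hterm : ∀ k : Fin n,
        ω ^ ((k : ℕ) * (j : ℕ)) * (starRingEnd ℂ) (ω ^ ((k : ℕ) * (j' : ℕ)))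
          = (ω ^ (j : ℕ) * (ω ^ (j' : ℕ))⁻¹) ^ (k : ℕ) := by
      intro k
      rw [map_pow, hconj]
      ring
    simp only [hterm]
    rw [Fin.sum_univ_eq_sum_range (fun k => (ω ^ (j : ℕ) * (ω ^ (j' : ℕ))⁻¹) ^ k)]
    by_cases hjj : j = j'
    · subst hjj
      simp [mul_inv_cancel₀ (pow_ne_zero _ hωne)]
    · rw [if_neg hjj]
      have hx1 : ω ^ (j : ℕ) * (ω ^ (j' : ℕ))⁻¹ ≠ 1 := by
        intro h
        apply hjj
        have : ω ^ (j : ℕ) = ω ^ (j' : ℕ) := by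
          field_simp at h
          exact h
        exact Fin.ext (hprim.pow_inj (lt_of_lt_of_le j.2 hn) (lt_of_lt_of_le j'.2 hn) this)
      rw [geom_sum_eq hx1]
      have : (ω ^ (j : ℕ) * (ω ^ (j' : ℕ))⁻¹) ^ n = 1 := by
        rw [mul_pow, inv_pow, ← pow_mul, ← pow_mul, mul_comm (j : ℕ) n, mul_comm (j' : ℕ) n,
          pow_mul, pow_mul, hω1, one_pow, one_pow, inv_one, mul_one]
      rw [this, sub_self, zero_div]
  -- the vectors
  set a : Fin n → Fin d → ℂ :=
    fun k j => (Real.sqrt (lam j) : ℂ) * ω ^ ((k : ℕ) * (j : ℕ)) with ha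
  have hne : (n : ℂ) ≠ 0 := Nat.cast_ne_zero.mpr hn0.ne'
  have haa : ∀ (k : Fin n) (j : Fin d), (starRingEnd ℂ) (a k j) * a k j = (lam j : ℂ) := by
    intro k j
    simp only [ha, _root_.map_mul, _root_.map_pow, Complex.conj_ofReal, hconj]
    rw [mul_mul_mul_comm, ← Complex.ofReal_mul, Real.mul_self_sqrt (hlam j),
      ← mul_pow, inv_mul_cancel₀ hωne, one_pow, mul_one]
  refine ⟨fun k i => ∑ j, a k j * U i j, ?_, ?_⟩
  · intro k
    calc star (fun i => ∑ j, a k j * U i j) ⬝ᵥ (fun i => ∑ j, a k j * U i j)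
        = ∑ i, (∑ j, (starRingEnd ℂ) (a k j) * (starRingEnd ℂ) (U i j)) *
            (∑ j', a k j' * U i j') := by
          simp [dotProduct, map_sum]
      _ = ∑ i, ∑ j, ∑ j', ((starRingEnd ℂ) (a k j) * (starRingEnd ℂ) (U i j)) *
            (a k j' * U i j') := by
          refine Finset.sum_congr rfl fun i _ => ?_
          rw [Finset.sum_mul_sum]
      _ = ∑ j, ∑ j', ∑ i, ((starRingEnd ℂ) (a k j) * (starRingEnd ℂ) (U i j)) *
            (a k j' * U i j') := by
          rw [Finset.sum_comm]
          exact Finset.sum_congr rfl fun j _ => Finset.sum_comm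
      _ = ∑ j, ∑ j', ((starRingEnd ℂ) (a k j) * a k j') *
            ∑ i, (starRingEnd ℂ) (U i j) * U i j' := by
          refine Finset.sum_congr rfl fun j _ => Finset.sum_congr rfl fun j' _ => ?_
          rw [Finset.mul_sum]
          exact Finset.sum_congr rfl fun i _ => by ring
      _ = ∑ j, (starRingEnd ℂ) (a k j) * a k j := by
          refine Finset.sum_congr rfl fun j _ => ?_
          simp only [hUentry, mul_ite, mul_one, mul_zero]
          simp
      _ = 1 := by
          rw [← hsum]
          exact Finset.sum_congr rfl fun j _ => haa k j
  · ext i i'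
    have hL : ρ i i' = ∑ j, (lam j : ℂ) * (U i j * (starRingEnd ℂ) (U i' j)) := by
      rw [hspec, Matrix.mul_apply]
      refine Finset.sum_congr rfl fun j _ => ?_
      rw [Matrix.mul_diagonal, Matrix.conjTranspose_apply]
      show U i j * ((lam j : ℝ) : ℂ) * star (U i' j) = _
      rw [RCLike.star_def]
      ring
    have hR : ∑ k : Fin n, (∑ j, a k j * U i j) * (starRingEnd ℂ) (∑ j', a k j' * U i' j')
        = ∑ j, (n : ℂ) * ((lam j : ℂ) * (U i j * (starRingEnd ℂ) (U i' j))) := by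
      calc ∑ k : Fin n, (∑ j, a k j * U i j) * (starRingEnd ℂ) (∑ j', a k j' * U i' j')
          = ∑ k : Fin n, ∑ j, ∑ j', (a k j * U i j) *
              ((starRingEnd ℂ) (a k j') * (starRingEnd ℂ) (U i' j')) := by
            refine Finset.sum_congr rfl fun k _ => ?_
            rw [map_sum, Finset.sum_mul_sum]
            exact Finset.sum_congr rfl fun j _ => Finset.sum_congr rfl fun j' _ => by
              rw [_root_.map_mul]
        _ = ∑ j, ∑ j', (∑ k : Fin n, a k j * (starRingEnd ℂ) (a k j')) *
              (U i j * (starRingEnd ℂ) (U i' j')) := by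
            rw [Finset.sum_comm]
            refine Finset.sum_congr rfl fun j _ => ?_
            rw [Finset.sum_comm]
            refine Finset.sum_congr rfl fun j' _ => ?_
            rw [Finset.sum_mul]
            exact Finset.sum_congr rfl fun k _ => by ring
        _ = ∑ j, ∑ j', ((Real.sqrt (lam j) : ℂ) * (Real.sqrt (lam j') : ℂ) *
              (if j = j' then (n : ℂ) else 0)) * (U i j * (starRingEnd ℂ) (U i' j')) := by
            refine Finset.sum_congr rfl fun j _ => Finset.sum_congr rfl fun j' _ => ?_
            congr 1
            rw [← hkey j j', Finset.mul_sum]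
            refine Finset.sum_congr rfl fun k _ => ?_
            simp only [ha, _root_.map_mul, Complex.conj_ofReal]
            ring
        _ = ∑ j, (n : ℂ) * ((lam j : ℂ) * (U i j * (starRingEnd ℂ) (U i' j))) := by
            refine Finset.sum_congr rfl fun j _ => ?_
            rw [Finset.sum_eq_single j]
            · rw [if_pos rfl, ← Complex.ofReal_mul, Real.mul_self_sqrt (hlam j)]
              ring
            · intro j' _ hj'
              rw [if_neg fun h => hj' h.symm]
              ring
            · intro h
              exact absurd (Finset.mem_univ j) h
    calc ρ i i'
        = (n : ℂ)⁻¹ * ∑ k : Fin n, (∑ j, a k j * U i j) *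
            (starRingEnd ℂ) (∑ j', a k j' * U i' j') := by
          rw [hR, hL, Finset.mul_sum]
          exact Finset.sum_congr rfl fun j _ => (inv_mul_cancel_left₀ hne _).symm
      _ = ((n : ℂ)⁻¹ • ∑ k : Fin n, Matrix.vecMulVec (fun i => ∑ j, a k j * U i j)
            (star (fun i => ∑ j, a k j * U i j))) i i' := by
          simp [Matrix.smul_apply, Matrix.sum_apply, Matrix.vecMulVec_apply, map_sum]
end

section
/- Given unit vector |ξ⟩ in a bipartite Hilbert space H_A ⊗ H_B with Schmidt coefficients λ(i), the squared fidelity between |ξ⟩⟨ξ| and the product of its marginals satisfies F(|ξ⟩⟨ξ|, ξ_A ⊗ ξ_B)² = Σ_i λ(i)³ ≥ ‖ξ_A‖_∞³, where ξ_A, ξ_B are the reduced states and ‖ξ_A‖_∞ is the largest eigenvalue of ξ_A. -/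
open Matrix
open scoped Classical ComplexOrder

lemma schmidt_vecMulVec_mulVec {nA nC : ℕ} (x : Fin nA → ℂ) (y z : Fin nC → ℂ) :
    Matrix.vecMulVec x y *ᵥ z = (y ⬝ᵥ z) • x := by
  ext i
  simp only [Matrix.mulVec, Matrix.vecMulVec_apply, dotProduct, Pi.smul_apply, smul_eq_mul,
    Finset.sum_mul]
  refine Finset.sum_congr rfl fun j _ => ?_
  ring

lemma schmidt_sum_mulVec {n k m : ℕ} (M : Fin m → Matrix (Fin n) (Fin k) ℂ)
    (x : Fin k → ℂ) : (∑ i, M i) *ᵥ x = ∑ i, M i *ᵥ x := by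
  ext j
  simp only [Matrix.mulVec, dotProduct, Matrix.sum_apply, Finset.sum_mul, Finset.sum_apply]
  exact Finset.sum_comm

lemma schmidt_dot {dA dB m : ℕ}
    (v : Fin m → Fin dA → ℂ) (w : Fin m → Fin dB → ℂ)
    (hv : ∀ i j, star (v i) ⬝ᵥ v j = if i = j then 1 else 0)
    (hw : ∀ i j, star (w i) ⬝ᵥ w j = if i = j then 1 else 0)
    (c d : Fin m → ℂ) :
    star (fun p : Fin dA × Fin dB => ∑ i, c i * v i p.1 * w i p.2) ⬝ᵥ
      (fun p : Fin dA × Fin dB => ∑ i, d i * v i p.1 * w i p.2)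
      = ∑ i, star (c i) * d i := by
  have step : ∀ i j : Fin m,
      (∑ p : Fin dA × Fin dB,
        star (c j * v j p.1 * w j p.2) * (d i * v i p.1 * w i p.2))
      = star (c j) * d i * ((star (v j) ⬝ᵥ v i) * (star (w j) ⬝ᵥ w i)) := by
    intro i j
    simp only [dotProduct, Pi.star_apply, StarMul.star_mul, Fintype.sum_prod_type,
      Finset.mul_sum, Finset.sum_mul]
    rw [Finset.sum_comm]
    refine Finset.sum_congr rfl fun b _ => Finset.sum_congr rfl fun a _ => ?_
    ring
  calc star (fun p : Fin dA × Fin dB => ∑ i, c i * v i p.1 * w i p.2) ⬝ᵥ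
      (fun p : Fin dA × Fin dB => ∑ i, d i * v i p.1 * w i p.2)
      = ∑ i, ∑ j, ∑ p : Fin dA × Fin dB,
          star (c j * v j p.1 * w j p.2) * (d i * v i p.1 * w i p.2) := by
        simp only [dotProduct, Pi.star_apply, star_sum, Finset.sum_mul, Finset.mul_sum]
        rw [Finset.sum_comm]
        refine Finset.sum_congr rfl fun i _ => Finset.sum_comm
    _ = ∑ i, ∑ j, star (c j) * d i * ((star (v j) ⬝ᵥ v i) * (star (w j) ⬝ᵥ w i)) := by
        simp only [step]
    _ = ∑ i, star (c i) * d i := by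
        refine Finset.sum_congr rfl fun i _ => ?_
        rw [Finset.sum_eq_single i]
        · simp [hv, hw]
        · intro j _ hj; simp [hv, hw, hj]
        · simp

/-- Given a unit vector `|ξ⟩ = ∑ i √(λ i) |v i⟩|w i⟩` in a bipartite Hilbert space
(a Schmidt decomposition, with `v`, `w` orthonormal families and Schmidt coefficients
`λ i ≥ 0` summing to `1`), the squared fidelity between `|ξ⟩⟨ξ|` and the tensor product
`ξ_A ⊗ ξ_B` of its marginals — which for a pure state equals `⟨ξ| ξ_A ⊗ ξ_B |ξ⟩` —
equals `∑ i (λ i)³`, and is at least `‖ξ_A‖_∞³`, the cube of the largest eigenvalue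
`⨆ i, λ i` of the reduced state `ξ_A = ∑ i λ i |v i⟩⟨v i|`. -/
theorem pure_product_fidelity_schmidt {dA dB m : ℕ} (hm : 0 < m)
    (lam : Fin m → ℝ) (hlam0 : ∀ i, 0 ≤ lam i) (hlam1 : ∑ i, lam i = 1)
    (v : Fin m → (Fin dA → ℂ)) (w : Fin m → (Fin dB → ℂ))
    (hv : ∀ i j, star (v i) ⬝ᵥ v j = if i = j then 1 else 0)
    (hw : ∀ i j, star (w i) ⬝ᵥ w j = if i = j then 1 else 0)
    (ξ : Fin dA × Fin dB → ℂ)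
    (hξ : ξ = fun ab => ∑ i, (Real.sqrt (lam i) : ℂ) * v i ab.1 * w i ab.2)
    (ξA : Matrix (Fin dA) (Fin dA) ℂ)
    (hξA : ξA = ∑ i, (lam i : ℂ) • Matrix.vecMulVec (v i) (star (v i)))
    (ξB : Matrix (Fin dB) (Fin dB) ℂ)
    (hξB : ξB = ∑ i, (lam i : ℂ) • Matrix.vecMulVec (w i) (star (w i)))
    (σ : Matrix (Fin dA × Fin dB) (Fin dA × Fin dB) ℂ)
    (hσ : σ = Matrix.of fun p q => ξA p.1 q.1 * ξB p.2 q.2) :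
    (star ξ ⬝ᵥ (σ *ᵥ ξ)).re = ∑ i, (lam i) ^ 3 ∧
      (⨆ i, lam i) ^ 3 ≤ ∑ i, (lam i) ^ 3 := by
  constructor
  · -- fidelity computation
    have hAv : ∀ l, ξA *ᵥ v l = (lam l : ℂ) • v l := by
      intro l
      rw [hξA, schmidt_sum_mulVec]
      have : ∀ j, ((lam j : ℂ) • Matrix.vecMulVec (v j) (star (v j))) *ᵥ v l
          = ((lam j : ℂ) * if j = l then 1 else 0) • v j := by
        intro j
        rw [Matrix.smul_mulVec, schmidt_vecMulVec_mulVec, hv j l, smul_smul]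
      simp only [this]
      rw [Finset.sum_eq_single l]
      · simp
      · intro j _ hj; simp [hj]
      · simp
    have hBw : ∀ l, ξB *ᵥ w l = (lam l : ℂ) • w l := by
      intro l
      rw [hξB, schmidt_sum_mulVec]
      have : ∀ j, ((lam j : ℂ) • Matrix.vecMulVec (w j) (star (w j))) *ᵥ w l
          = ((lam j : ℂ) * if j = l then 1 else 0) • w j := by
        intro j
        rw [Matrix.smul_mulVec, schmidt_vecMulVec_mulVec, hw j l, smul_smul]
      simp only [this]
      rw [Finset.sum_eq_single l]
      · simp
      · intro j _ hj; simp [hj]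
      · simp
    have hσξ : σ *ᵥ ξ = fun p : Fin dA × Fin dB =>
        ∑ l, ((lam l : ℂ) * (lam l : ℂ) * (Real.sqrt (lam l) : ℂ)) * v l p.1 * w l p.2 := by
      funext p
      have L1 : (σ *ᵥ ξ) p = ∑ a, ∑ b, ∑ l,
          ξA p.1 a * ξB p.2 b * ((Real.sqrt (lam l) : ℂ) * v l a * w l b) := by
        rw [hσ, hξ]
        simp only [Matrix.mulVec, dotProduct, Matrix.of_apply, Fintype.sum_prod_type,
          Finset.mul_sum]
      have L : (σ *ᵥ ξ) p = ∑ l, ∑ a, ∑ b,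
          ξA p.1 a * ξB p.2 b * ((Real.sqrt (lam l) : ℂ) * v l a * w l b) := by
        rw [L1]
        calc ∑ a, ∑ b, ∑ l, ξA p.1 a * ξB p.2 b * ((Real.sqrt (lam l) : ℂ) * v l a * w l b)
            = ∑ a, ∑ l, ∑ b, ξA p.1 a * ξB p.2 b * ((Real.sqrt (lam l) : ℂ) * v l a * w l b) :=
              Finset.sum_congr rfl fun a _ => Finset.sum_comm
          _ = ∑ l, ∑ a, ∑ b, ξA p.1 a * ξB p.2 b * ((Real.sqrt (lam l) : ℂ) * v l a * w l b) :=
              Finset.sum_comm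
      have R : ∀ l, (Real.sqrt (lam l) : ℂ) * ((ξA *ᵥ v l) p.1 * (ξB *ᵥ w l) p.2)
          = ∑ a, ∑ b, ξA p.1 a * ξB p.2 b * ((Real.sqrt (lam l) : ℂ) * v l a * w l b) := by
        intro l
        simp only [Matrix.mulVec, dotProduct]
        rw [Finset.sum_mul_sum, Finset.mul_sum]
        refine Finset.sum_congr rfl fun a _ => ?_
        rw [Finset.mul_sum]
        refine Finset.sum_congr rfl fun b _ => ?_
        ring
      rw [L]
      rw [show (∑ l, ∑ a, ∑ b, ξA p.1 a * ξB p.2 b * ((Real.sqrt (lam l) : ℂ) * v l a * w l b))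
          = ∑ l, (Real.sqrt (lam l) : ℂ) * ((ξA *ᵥ v l) p.1 * (ξB *ᵥ w l) p.2) from
        (Finset.sum_congr rfl fun l _ => (R l).symm)]
      refine Finset.sum_congr rfl fun l _ => ?_
      rw [hAv, hBw]
      simp only [Pi.smul_apply, smul_eq_mul]
      ring
    rw [hσξ, hξ]
    rw [schmidt_dot v w hv hw]
    have key : ∀ i : Fin m, star ((Real.sqrt (lam i) : ℂ))
        * ((lam i : ℂ) * (lam i : ℂ) * (Real.sqrt (lam i) : ℂ)) = ((lam i ^ 3 : ℝ) : ℂ) := by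
      intro i
      have hr : Real.sqrt (lam i) * (lam i * lam i * Real.sqrt (lam i)) = lam i ^ 3 := by
        nlinarith [Real.mul_self_sqrt (hlam0 i)]
      calc star ((Real.sqrt (lam i) : ℂ)) * ((lam i : ℂ) * (lam i : ℂ) * (Real.sqrt (lam i) : ℂ))
          = ((Real.sqrt (lam i) * (lam i * lam i * Real.sqrt (lam i)) : ℝ) : ℂ) := by
            rw [Complex.star_def, Complex.conj_ofReal]; push_cast; ring
        _ = ((lam i ^ 3 : ℝ) : ℂ) := by rw [hr]
    simp only [key, ← Complex.ofReal_sum, Complex.ofReal_re]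
  · -- sup bound
    have hne : Nonempty (Fin m) := ⟨⟨0, hm⟩⟩
    obtain ⟨i₀, hi₀⟩ := Finite.exists_max lam
    have hsup : (⨆ i, lam i) = lam i₀ :=
      le_antisymm (ciSup_le hi₀) (le_ciSup (Finite.bddAbove_range lam) i₀)
    rw [hsup]
    exact Finset.single_le_sum (fun i _ => pow_nonneg (hlam0 i) 3) (Finset.mem_univ i₀)
end

section
/- If a unitary U on H^{⊗n} ⊗ K transforms ρ^n ⊗ ω' into σ^n ⊗ ω up to trace-norm error vanishing in n, commutes asymptotically with the total charges (‖[U, A_j^{(n)}]‖_∞ = o(n)), and dim K = 2^{o(n)} with trivial ancilla charges, then the per-copy charge expectations converge: (1/n)|Tr(ρ^n A_j^{(n)}) − Tr(σ^n A_j^{(n)})| → 0 for each j. -/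
open Matrix Kronecker Filter
open scoped Classical ComplexOrder Topology

/-- The total charge `A^{(n)} = ∑ i 𝟙^{⊗(i-1)} ⊗ A ⊗ 𝟙^{⊗(n-i)}` of `n` non-interacting
copies of a `d`-dimensional system, on the Hilbert space indexed by `Fin n → Fin d`. -/
noncomputable def liftCharge {d : ℕ} (A : Matrix (Fin d) (Fin d) ℂ) (n : ℕ) :
    Matrix (Fin n → Fin d) (Fin n → Fin d) ℂ :=
  ∑ i : Fin n, Matrix.of fun x y =>
    if ∀ k, k ≠ i → x k = y k then A (x i) (y i) else 0

set_option linter.unusedSectionVars false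
set_option maxHeartbeats 1000000

namespace ChargeAux

variable {m : Type*} [Fintype m] [DecidableEq m]

lemma eigenvalues_congr {M N : Matrix m m ℂ} (h : M = N) (hM : M.IsHermitian)
    (hN : N.IsHermitian) : hM.eigenvalues = hN.eigenvalues := by subst h; rfl

lemma singVals_nonneg (X : Matrix m m ℂ) (i : m) : 0 ≤ singVals X i := Real.sqrt_nonneg _

lemma opNorm_nonneg (X : Matrix m m ℂ) : 0 ≤ opNorm X := Real.iSup_nonneg (singVals_nonneg X)

lemma singVals_le_opNorm (X : Matrix m m ℂ) (i : m) : singVals X i ≤ opNorm X :=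
  le_ciSup (Set.finite_range _).bddAbove i

/-- The Euclidean (`ℓ²`) norm of a vector. -/
noncomputable def enorm (v : m → ℂ) : ℝ := ‖(WithLp.linearEquiv 2 ℂ (m → ℂ)).symm v‖

lemma enorm_nonneg (v : m → ℂ) : 0 ≤ enorm v := norm_nonneg _

lemma enorm_sq (v : m → ℂ) : enorm v ^ 2 = ∑ i, Complex.normSq (v i) := by
  rw [enorm, EuclideanSpace.norm_eq, Real.sq_sqrt (by positivity)]
  simp [Complex.normSq_eq_norm_sq]

lemma re_star_dot (v : m → ℂ) : (star v ⬝ᵥ v).re = enorm v ^ 2 := by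
  rw [enorm_sq, dotProduct, Complex.re_sum]
  congr 1; ext i
  simp [Complex.normSq_apply, Complex.mul_re]

lemma abs_dot_le (u w : m → ℂ) : ‖star u ⬝ᵥ w‖ ≤ enorm u * enorm w := by
  have h := norm_inner_le_norm (𝕜 := ℂ)
    ((WithLp.equiv 2 (m → ℂ)).symm u) ((WithLp.equiv 2 (m → ℂ)).symm w)
  have e : inner ℂ ((WithLp.equiv 2 (m → ℂ)).symm u) ((WithLp.equiv 2 (m → ℂ)).symm w)
      = star u ⬝ᵥ w := by rw [dotProduct_comm]; rfl
  rw [e] at h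
  exact h

/-- Quadratic-form bound via the largest eigenvalue. -/
lemma re_dot_mulVec_le {H : Matrix m m ℂ} (hH : H.IsHermitian) {K : ℝ}
    (hK : ∀ i, hH.eigenvalues i ≤ K) (v : m → ℂ) :
    (star v ⬝ᵥ H *ᵥ v).re ≤ K * (star v ⬝ᵥ v).re := by
  set C : Matrix m m ℂ := ↑hH.eigenvectorUnitary with hC
  have hCC : C * Cᴴ = 1 := by
    simpa [star_eq_conjTranspose] using Matrix.mem_unitaryGroup_iff.mp hH.eigenvectorUnitary.2
  set w : m → ℂ := Cᴴ *ᵥ v with hw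
  have hsw : star w = star v ᵥ* C := by
    rw [hw, star_mulVec, conjTranspose_conjTranspose]
  have h2 : star v ⬝ᵥ v = star w ⬝ᵥ w := by
    rw [hw, hsw, ← dotProduct_mulVec, mulVec_mulVec, hCC, one_mulVec]
  have h1 : star v ⬝ᵥ H *ᵥ v
      = star w ⬝ᵥ (Matrix.diagonal (RCLike.ofReal ∘ hH.eigenvalues) : Matrix m m ℂ) *ᵥ w := by
    conv_lhs => rw [hH.spectral_theorem, Unitary.conjStarAlgAut_apply]
    rw [star_eq_conjTranspose, ← mulVec_mulVec, ← mulVec_mulVec, dotProduct_mulVec, ← hsw, hw]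
  rw [h1, h2]
  have hdiag : (star w ⬝ᵥ (Matrix.diagonal (RCLike.ofReal ∘ hH.eigenvalues) : Matrix m m ℂ) *ᵥ w).re
      = ∑ i, hH.eigenvalues i * Complex.normSq (w i) := by
    rw [dotProduct, Complex.re_sum]
    congr 1; ext i
    simp [mulVec_diagonal, Complex.normSq_apply, Complex.mul_re, Complex.mul_im]
    ring
  rw [hdiag, re_star_dot, enorm_sq, Finset.mul_sum]
  exact Finset.sum_le_sum fun i _ =>
    mul_le_mul_of_nonneg_right (hK i) (Complex.normSq_nonneg _)

lemma dot_conj_mul (X : Matrix m m ℂ) (v : m → ℂ) :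
    star v ⬝ᵥ ((Xᴴ * X) *ᵥ v) = star (X *ᵥ v) ⬝ᵥ (X *ᵥ v) := by
  rw [← mulVec_mulVec, dotProduct_mulVec, ← star_mulVec]

lemma enorm_mulVec_sq_le (X : Matrix m m ℂ) (v : m → ℂ) :
    enorm (X *ᵥ v) ^ 2 ≤ opNorm X ^ 2 * enorm v ^ 2 := by
  have h1 : enorm (X *ᵥ v) ^ 2 = (star v ⬝ᵥ ((Xᴴ * X) *ᵥ v)).re := by
    rw [dot_conj_mul, re_star_dot]
  rw [h1]
  have h2 := re_dot_mulVec_le (Matrix.isHermitian_conjTranspose_mul_self X)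
    (K := opNorm X ^ 2) (fun i => ?_) v
  · rw [re_star_dot] at h2; exact h2
  · have hnn := (Matrix.posSemidef_conjTranspose_mul_self X).eigenvalues_nonneg i
    have h3 : (Matrix.isHermitian_conjTranspose_mul_self X).eigenvalues i = singVals X i ^ 2 := by
      rw [singVals, Real.sq_sqrt hnn]
    rw [h3]
    exact pow_le_pow_left₀ (Real.sqrt_nonneg _) (singVals_le_opNorm X i) 2

lemma enorm_mulVec_le (X : Matrix m m ℂ) (v : m → ℂ) :
    enorm (X *ᵥ v) ≤ opNorm X * enorm v := by
  have h := Real.sqrt_le_sqrt (enorm_mulVec_sq_le X v)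
  rwa [Real.sqrt_sq (enorm_nonneg _), ← mul_pow,
    Real.sqrt_sq (mul_nonneg (opNorm_nonneg X) (enorm_nonneg _))] at h

lemma opNorm_le (X : Matrix m m ℂ) {K : ℝ} (hK : 0 ≤ K)
    (h : ∀ v, enorm (X *ᵥ v) ≤ K * enorm v) : opNorm X ≤ K := by
  rcases isEmpty_or_nonempty m with hm | hm
  · rw [opNorm, Real.iSup_of_isEmpty]; exact hK
  · refine ciSup_le fun i => ?_
    set hN := Matrix.isHermitian_conjTranspose_mul_self X with hNdef
    set b : m → ℂ := ⇑(hN.eigenvectorBasis i) with hb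
    have hb1 : enorm b = 1 := by
      rw [enorm]; exact hN.eigenvectorBasis.orthonormal.1 i
    have heig : hN.eigenvalues i = enorm (X *ᵥ b) ^ 2 := by
      rw [hN.eigenvalues_eq i, ← hb, dot_conj_mul]
      simp only [RCLike.re_eq_complex_re]
      rw [re_star_dot]
    have hXb : enorm (X *ᵥ b) ≤ K := by
      have := h b; rwa [hb1, mul_one] at this
    calc singVals X i = Real.sqrt (enorm (X *ᵥ b) ^ 2) := by rw [singVals, heig]
    _ = enorm (X *ᵥ b) := Real.sqrt_sq (enorm_nonneg _)
    _ ≤ K := hXb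

lemma trace_eq_sum_basis (M : Matrix m m ℂ) {H : Matrix m m ℂ} (hH : H.IsHermitian) :
    M.trace = ∑ i, star (⇑(hH.eigenvectorBasis i)) ⬝ᵥ (M *ᵥ ⇑(hH.eigenvectorBasis i)) := by
  set C : Matrix m m ℂ := ↑hH.eigenvectorUnitary with hC
  have hCC : C * Cᴴ = 1 := by
    simpa [star_eq_conjTranspose] using Matrix.mem_unitaryGroup_iff.mp hH.eigenvectorUnitary.2
  have h1 : M.trace = (Cᴴ * M * C).trace := by
    rw [trace_mul_comm, ← mul_assoc, hCC, one_mul]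
  rw [h1, trace]
  congr 1; ext i
  simp only [diag_apply, mul_apply, conjTranspose_apply, dotProduct, mulVec, dotProduct,
    Finset.sum_mul, Finset.mul_sum]
  rw [Finset.sum_comm]
  apply Finset.sum_congr rfl; intro j _
  apply Finset.sum_congr rfl; intro k _
  have hCap : ∀ a b, C a b = ⇑(hH.eigenvectorBasis b) a := fun a b => rfl
  rw [hCap, hCap]
  simp [Pi.star_apply, mul_comm, mul_left_comm]
  ring

/-- Hölder's inequality `|Tr(X Y)| ≤ ‖X‖_∞ ‖Y‖₁`. -/
lemma holder (X Y : Matrix m m ℂ) :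
    ‖(X * Y).trace‖ ≤ opNorm X * traceNorm Y := by
  set hN := Matrix.isHermitian_conjTranspose_mul_self Y with hNdef
  rw [trace_eq_sum_basis (X * Y) hN]
  refine (norm_sum_le _ _).trans ?_
  have hstep : ∀ i, ‖(star (⇑(hN.eigenvectorBasis i)) ⬝ᵥ
      ((X * Y) *ᵥ ⇑(hN.eigenvectorBasis i)))‖ ≤ opNorm X * singVals Y i := by
    intro i
    set b : m → ℂ := ⇑(hN.eigenvectorBasis i) with hb
    have hb1 : enorm b = 1 := by rw [enorm]; exact hN.eigenvectorBasis.orthonormal.1 i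
    have hYb : enorm (Y *ᵥ b) = singVals Y i := by
      have h1 : enorm (Y *ᵥ b) ^ 2 = hN.eigenvalues i := by
        rw [← re_star_dot, ← dot_conj_mul, hN.eigenvalues_eq i]
        simp only [RCLike.re_eq_complex_re]
        rfl
      rw [singVals, ← h1, Real.sqrt_sq (enorm_nonneg _)]
    calc ‖(star b ⬝ᵥ ((X * Y) *ᵥ b))‖
        = ‖(star b ⬝ᵥ (X *ᵥ (Y *ᵥ b)))‖ := by rw [mulVec_mulVec]
      _ ≤ enorm b * enorm (X *ᵥ (Y *ᵥ b)) := abs_dot_le _ _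
      _ ≤ 1 * (opNorm X * enorm (Y *ᵥ b)) := by
          rw [hb1]; exact mul_le_mul_of_nonneg_left (enorm_mulVec_le _ _) one_pos.le
      _ = opNorm X * singVals Y i := by rw [one_mul, hYb]
  refine (Finset.sum_le_sum fun i _ => hstep i).trans ?_
  rw [traceNorm, Finset.mul_sum]

lemma traceNorm_nonneg (Y : Matrix m m ℂ) : 0 ≤ traceNorm Y :=
  Finset.sum_nonneg fun i _ => Real.sqrt_nonneg _

open scoped MatrixOrder in
lemma traceNorm_psd_eq_trace {Y : Matrix m m ℂ} (hY : Y.PosSemidef) :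
    (traceNorm Y : ℂ) = Y.trace := by
  have hsq : Y ^ 2 = Yᴴ * Y := by rw [pow_two, hY.1.eq]
  have h1 : Y = (Matrix.posSemidef_conjTranspose_mul_self Y).1.cfc Real.sqrt := by
    have hY0 : (0 : Matrix m m ℂ) ≤ Y := Matrix.nonneg_iff_posSemidef.mpr hY
    have h0 : (0 : Matrix m m ℂ) ≤ Y ^ 2 := by
      rw [hsq]; exact Matrix.nonneg_iff_posSemidef.mpr (Matrix.posSemidef_conjTranspose_mul_self Y)
    rw [← (Matrix.posSemidef_conjTranspose_mul_self Y).1.cfc_eq, ← hsq,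
      ← cfcₙ_eq_cfc, ← CFC.sqrt_eq_real_sqrt (Y ^ 2) h0, CFC.sqrt_sq Y hY0]
  conv_rhs => rw [h1]
  rw [Matrix.IsHermitian.cfc, Unitary.conjStarAlgAut_apply]
  set C : Matrix m m ℂ := ↑(Matrix.posSemidef_conjTranspose_mul_self Y).1.eigenvectorUnitary
  have hCC : Cᴴ * C = 1 := by
    simpa [star_eq_conjTranspose] using Matrix.mem_unitaryGroup_iff'.mp
      (Matrix.posSemidef_conjTranspose_mul_self Y).1.eigenvectorUnitary.2
  rw [trace_mul_cycle, star_eq_conjTranspose, hCC, one_mul, trace_diagonal]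
  rw [traceNorm]
  push_cast
  apply Finset.sum_congr rfl
  intro i _
  rw [singVals]
  norm_num

lemma sum_normSq_mulVec_le (X : Matrix m m ℂ) (v : m → ℂ) :
    ∑ i, Complex.normSq ((X *ᵥ v) i) ≤ opNorm X ^ 2 * ∑ i, Complex.normSq (v i) := by
  have := enorm_mulVec_sq_le X v
  rwa [enorm_sq, enorm_sq] at this

lemma le_of_sq_le_sq {a b : ℝ} (ha : 0 ≤ a) (hb : 0 ≤ b) (h : a ^ 2 ≤ b ^ 2) : a ≤ b := by
  nlinarith

lemma enorm_sum_le {ι : Type*} (s : Finset ι) (f : ι → (m → ℂ)) :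
    enorm (∑ i ∈ s, f i) ≤ ∑ i ∈ s, enorm (f i) := by
  rw [enorm, map_sum]
  exact norm_sum_le _ _

lemma sum_mulVec {ι : Type*} (s : Finset ι) (M : ι → Matrix m m ℂ) (v : m → ℂ) :
    (∑ i ∈ s, M i) *ᵥ v = ∑ i ∈ s, (M i *ᵥ v) := by
  ext x
  simp only [mulVec, dotProduct, Finset.sum_apply, Matrix.sum_apply, Finset.sum_mul]
  exact Finset.sum_comm

lemma opNorm_unitary_left {u C : Matrix m m ℂ} (hu : u * uᴴ = 1) :
    opNorm (uᴴ * C) = opNorm C := by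
  have h : (uᴴ * C)ᴴ * (uᴴ * C) = Cᴴ * C := by
    rw [conjTranspose_mul, conjTranspose_conjTranspose]
    calc Cᴴ * u * (uᴴ * C) = Cᴴ * (u * uᴴ) * C := by noncomm_ring
    _ = Cᴴ * C := by rw [hu, mul_one]
  unfold opNorm singVals
  congr 1
  ext i
  rw [eigenvalues_congr h _ _]

lemma opNorm_kron_one {q : Type*} [Fintype q] [DecidableEq q] (P : Matrix m m ℂ) :
    opNorm (P ⊗ₖ (1 : Matrix q q ℂ)) ≤ opNorm P := by
  apply opNorm_le _ (opNorm_nonneg P)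
  intro v
  apply le_of_sq_le_sq (enorm_nonneg _) (mul_nonneg (opNorm_nonneg _) (enorm_nonneg _))
  rw [mul_pow, enorm_sq, enorm_sq]
  have hmv : ∀ (a : m) (k : q),
      ((P ⊗ₖ (1 : Matrix q q ℂ)) *ᵥ v) (a, k) = (P *ᵥ fun b => v (b, k)) a := by
    intro a k
    simp only [mulVec, dotProduct, Fintype.sum_prod_type, kroneckerMap_apply, one_apply,
      mul_ite, mul_one, mul_zero, ite_mul, zero_mul]
    apply Finset.sum_congr rfl
    intro b _
    rw [Finset.sum_ite_eq (Finset.univ : Finset q) k (fun l => P a b * v (b, l))]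
    simp
  calc ∑ i : m × q, Complex.normSq (((P ⊗ₖ (1 : Matrix q q ℂ)) *ᵥ v) i)
      = ∑ k : q, ∑ a : m, Complex.normSq ((P *ᵥ fun b => v (b, k)) a) := by
        rw [Fintype.sum_prod_type, Finset.sum_comm]
        exact Finset.sum_congr rfl fun k _ => Finset.sum_congr rfl fun a _ => by rw [hmv]
    _ ≤ ∑ k : q, opNorm P ^ 2 * ∑ b : m, Complex.normSq (v (b, k)) :=
        Finset.sum_le_sum fun k _ => sum_normSq_mulVec_le P _
    _ = opNorm P ^ 2 * ∑ i : m × q, Complex.normSq (v i) := by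
        rw [← Finset.mul_sum, Fintype.sum_prod_type, Finset.sum_comm]

section Lift
variable {d n : ℕ}

noncomputable def liftTerm (A : Matrix (Fin d) (Fin d) ℂ) (n : ℕ) (i : Fin n) :
    Matrix (Fin n → Fin d) (Fin n → Fin d) ℂ :=
  Matrix.of fun x y => if ∀ k, k ≠ i → x k = y k then A (x i) (y i) else 0

lemma liftTerm_mulVec (A : Matrix (Fin d) (Fin d) ℂ) (i : Fin n)
    (v : (Fin n → Fin d) → ℂ) (x : Fin n → Fin d) :
    (liftTerm A n i *ᵥ v) x = ∑ b, A (x i) b * v (Function.update x i b) := by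
  rw [liftTerm, mulVec, dotProduct]
  have key : ∀ y : Fin n → Fin d,
      (Matrix.of fun x y => if ∀ k, k ≠ i → x k = y k then A (x i) (y i) else 0) x y * v y
      = ∑ b, if Function.update x i b = y then A (x i) b * v (Function.update x i b) else 0 := by
    intro y
    by_cases h : ∀ k, k ≠ i → x k = y k
    · have huniq : Function.update x i (y i) = y := by
        funext k
        by_cases hk : k = i
        · subst hk; simp
        · simp [Function.update, hk, h k hk]
      rw [Matrix.of_apply, if_pos h]
      have hiff : ∀ b : Fin d, (Function.update x i b = y) ↔ (b = y i) := by
        intro b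
        constructor
        · intro hb; rw [← hb]; simp
        · intro hb; rw [hb, huniq]
      calc (A (x i) (y i)) * v y
          = ∑ b, if b = y i then A (x i) b * v (Function.update x i b) else 0 := by
            rw [Finset.sum_ite_eq' Finset.univ (y i)
              (fun b => A (x i) b * v (Function.update x i b))]
            simp [huniq]
        _ = ∑ b, if Function.update x i b = y then A (x i) b * v (Function.update x i b)
              else 0 :=
            Finset.sum_congr rfl fun b _ => by rw [if_congr (hiff b) rfl rfl]
    · rw [Matrix.of_apply, if_neg h, zero_mul]
      symm
      apply Finset.sum_eq_zero
      intro b _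
      rw [if_neg]
      intro hb
      exact h fun k hk => by rw [← hb]; simp [Function.update, hk]
  rw [Finset.sum_congr rfl fun y _ => key y, Finset.sum_comm]
  apply Finset.sum_congr rfl
  intro b _
  rw [Finset.sum_ite_eq (Finset.univ : Finset (Fin n → Fin d)) (Function.update x i b)]
  simp

lemma opNorm_liftTerm (A : Matrix (Fin d) (Fin d) ℂ) (i : Fin n) :
    opNorm (liftTerm A n i) ≤ opNorm A := by
  apply opNorm_le _ (opNorm_nonneg A)
  intro v
  apply le_of_sq_le_sq (enorm_nonneg _) (mul_nonneg (opNorm_nonneg _) (enorm_nonneg _))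
  rw [mul_pow, enorm_sq, enorm_sq]
  set e : (Fin n → Fin d) ≃ (Fin d × ({ k : Fin n // k ≠ i } → Fin d)) :=
    Equiv.funSplitAt i (Fin d) with he
  have hsymm_i : ∀ (t : Fin d) z, e.symm (t, z) i = t := by
    intro t z; simp [he, Equiv.funSplitAt, Equiv.piSplitAt]
  have hsymm_ne : ∀ (t : Fin d) z (k : Fin n) (hk : k ≠ i), e.symm (t, z) k = z ⟨k, hk⟩ := by
    intro t z k hk; simp [he, Equiv.funSplitAt, Equiv.piSplitAt, hk]
  have hupd : ∀ (t b : Fin d) z, Function.update (e.symm (t, z)) i b = e.symm (b, z) := by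
    intro t b z
    funext k
    by_cases hk : k = i
    · subst hk; simp [hsymm_i]
    · simp [Function.update, hk, hsymm_ne t z k hk, hsymm_ne b z k hk]
  calc ∑ x, Complex.normSq ((liftTerm A n i *ᵥ v) x)
      = ∑ p : Fin d × ({ k : Fin n // k ≠ i } → Fin d),
          Complex.normSq ((liftTerm A n i *ᵥ v) (e.symm p)) :=
        (Fintype.sum_equiv e.symm _ _ fun p => rfl).symm
    _ = ∑ z, ∑ t, Complex.normSq ((A *ᵥ fun b => v (e.symm (b, z))) t) := by
        rw [Fintype.sum_prod_type, Finset.sum_comm]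
        apply Finset.sum_congr rfl; intro z _
        apply Finset.sum_congr rfl; intro t _
        congr 1
        rw [liftTerm_mulVec, mulVec, dotProduct, hsymm_i]
        exact Finset.sum_congr rfl fun b _ => by rw [hupd]
    _ ≤ ∑ z : ({ k : Fin n // k ≠ i } → Fin d),
          opNorm A ^ 2 * ∑ b, Complex.normSq (v (e.symm (b, z))) :=
        Finset.sum_le_sum fun z _ => sum_normSq_mulVec_le A _
    _ = opNorm A ^ 2 * ∑ x, Complex.normSq (v x) := by
        rw [← Finset.mul_sum]
        congr 1
        calc ∑ z, ∑ b, Complex.normSq (v (e.symm (b, z)))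
            = ∑ p : Fin d × ({ k : Fin n // k ≠ i } → Fin d),
                Complex.normSq (v (e.symm p)) := by
              rw [Fintype.sum_prod_type, Finset.sum_comm]
          _ = ∑ x, Complex.normSq (v x) := Fintype.sum_equiv e.symm _ _ fun p => rfl

lemma opNorm_liftCharge (A : Matrix (Fin d) (Fin d) ℂ) (n : ℕ) :
    opNorm (liftCharge A n) ≤ n * opNorm A := by
  have h : liftCharge A n = ∑ i : Fin n, liftTerm A n i := rfl
  rw [h]
  apply opNorm_le _ (mul_nonneg (Nat.cast_nonneg n) (opNorm_nonneg A))
  intro v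
  rw [sum_mulVec]
  refine (enorm_sum_le _ _).trans ?_
  calc ∑ i : Fin n, enorm (liftTerm A n i *ᵥ v)
      ≤ ∑ _i : Fin n, opNorm A * enorm v := by
        apply Finset.sum_le_sum
        intro i _
        calc enorm (liftTerm A n i *ᵥ v) ≤ opNorm (liftTerm A n i) * enorm v :=
              enorm_mulVec_le _ v
          _ ≤ opNorm A * enorm v :=
              mul_le_mul_of_nonneg_right (opNorm_liftTerm A i) (enorm_nonneg v)
    _ = n * opNorm A * enorm v := by
        rw [Finset.sum_const, Finset.card_univ, Fintype.card_fin, nsmul_eq_mul, mul_assoc]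

end Lift

lemma conjTranspose_kron {p q : Type*} [Fintype p] [Fintype q]
    (B : Matrix p p ℂ) (D : Matrix q q ℂ) : (B ⊗ₖ D)ᴴ = Bᴴ ⊗ₖ Dᴴ := by
  ext ⟨a, b⟩ ⟨c, e⟩
  simp [conjTranspose_apply, kroneckerMap_apply, mul_comm]

lemma posSemidef_kron {p q : Type*} [Fintype p] [Fintype q] [DecidableEq p] [DecidableEq q]
    {P : Matrix p p ℂ} {Q : Matrix q q ℂ} (hP : P.PosSemidef) (hQ : Q.PosSemidef) :
    (P ⊗ₖ Q).PosSemidef := by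
  exact hP.kronecker hQ

end ChargeAux

open ChargeAux in
/-- If, for each `n`, a unitary `U n` on `H^{⊗n} ⊗ K_n` transforms `ρⁿ ⊗ ω'` into
`σⁿ ⊗ ω` up to trace-norm error vanishing in `n`, commutes asymptotically with the
total charges (`‖[U, A_j^{(n)} ⊗ 𝟙]‖_∞ = o(n)`, the ancilla carrying trivial charges),
and `dim K_n = 2^{o(n)}`, then the per-copy charge expectation values converge:
`(1/n)|Tr(ρⁿ A_j^{(n)}) − Tr(σⁿ A_j^{(n)})| → 0` for each `j`. -/
theorem charges_converge_of_almost_commuting (d c : ℕ)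
    (A : Fin c → Matrix (Fin d) (Fin d) ℂ) (hA : ∀ j, (A j).IsHermitian)
    (Kdim : ℕ → ℕ)
    (hK : Tendsto (fun n : ℕ => Real.log (Kdim n) / n) atTop (𝓝 0))
    (ρ σ : (n : ℕ) → Matrix (Fin n → Fin d) (Fin n → Fin d) ℂ)
    (hρ : ∀ n, (ρ n).PosSemidef) (hρtr : ∀ n, (ρ n).trace = 1)
    (hσ : ∀ n, (σ n).PosSemidef) (hσtr : ∀ n, (σ n).trace = 1)
    (ω ω' : (n : ℕ) → Matrix (Fin (Kdim n)) (Fin (Kdim n)) ℂ)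
    (hω : ∀ n, (ω n).PosSemidef) (hωtr : ∀ n, (ω n).trace = 1)
    (hω' : ∀ n, (ω' n).PosSemidef) (hω'tr : ∀ n, (ω' n).trace = 1)
    (U : (n : ℕ) →
      Matrix ((Fin n → Fin d) × Fin (Kdim n)) ((Fin n → Fin d) × Fin (Kdim n)) ℂ)
    (hU : ∀ n, (U n)ᴴ * U n = 1 ∧ U n * (U n)ᴴ = 1)
    (herr : Tendsto
      (fun n : ℕ => traceNorm (U n * (ρ n ⊗ₖ ω' n) * (U n)ᴴ - σ n ⊗ₖ ω n))
      atTop (𝓝 0))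
    (hcomm : ∀ j, Tendsto
      (fun n : ℕ => (1 / (n : ℝ)) *
        opNorm (U n * (liftCharge (A j) n ⊗ₖ (1 : Matrix (Fin (Kdim n)) (Fin (Kdim n)) ℂ))
          - (liftCharge (A j) n ⊗ₖ (1 : Matrix (Fin (Kdim n)) (Fin (Kdim n)) ℂ)) * U n))
      atTop (𝓝 0)) :
    ∀ j, Tendsto
      (fun n : ℕ => (1 / (n : ℝ)) *
        ‖(ρ n * liftCharge (A j) n).trace - (σ n * liftCharge (A j) n).trace‖)
      atTop (𝓝 0) := by
  intro j
  have hopA0 : 0 ≤ opNorm (A j) := opNorm_nonneg _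
  have hg : Tendsto (fun n : ℕ =>
      opNorm (A j) * traceNorm (U n * (ρ n ⊗ₖ ω' n) * (U n)ᴴ - σ n ⊗ₖ ω n)
      + (1 / (n : ℝ)) *
        opNorm (U n * (liftCharge (A j) n ⊗ₖ (1 : Matrix (Fin (Kdim n)) (Fin (Kdim n)) ℂ))
          - (liftCharge (A j) n ⊗ₖ (1 : Matrix (Fin (Kdim n)) (Fin (Kdim n)) ℂ)) * U n))
      atTop (𝓝 0) := by
    have h1 := herr.const_mul (opNorm (A j))
    have h2 := h1.add (hcomm j)
    simpa using h2
  apply tendsto_of_tendsto_of_tendsto_of_le_of_le' tendsto_const_nhds hg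
  · filter_upwards with n
    have := norm_nonneg ((ρ n * liftCharge (A j) n).trace
      - (σ n * liftCharge (A j) n).trace)
    positivity
  · filter_upwards with n
    -- abbreviations
    set N := liftCharge (A j) n with hN
    set Bm := N ⊗ₖ (1 : Matrix (Fin (Kdim n)) (Fin (Kdim n)) ℂ) with hBm
    set u := U n with hu
    set X := ρ n ⊗ₖ ω' n with hX
    set S := σ n ⊗ₖ ω n with hS
    set Cm := u * Bm - Bm * u with hCm
    set E := u * X * uᴴ - S with hE
    have huu : uᴴ * u = 1 := (hU n).1
    have hXB : (X * Bm).trace = (ρ n * N).trace := by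
      rw [hX, hBm, ← mul_kronecker_mul, trace_kronecker, mul_one, hω'tr n, mul_one]
    have hSB : (S * Bm).trace = (σ n * N).trace := by
      rw [hS, hBm, ← mul_kronecker_mul, trace_kronecker, mul_one, hωtr n, mul_one]
    have key : (ρ n * N).trace - (σ n * N).trace = ((uᴴ * Cm) * X).trace + (Bm * E).trace := by
      have e1 : (uᴴ * Cm) * X = Bm * X - (uᴴ * Bm * u) * X := by
        rw [hCm]
        calc (uᴴ * (u * Bm - Bm * u)) * X
            = (uᴴ * u * Bm - uᴴ * Bm * u) * X := by noncomm_ring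
          _ = (Bm - uᴴ * Bm * u) * X := by rw [huu, one_mul]
          _ = Bm * X - (uᴴ * Bm * u) * X := by noncomm_ring
      have e2 : Bm * E = Bm * (u * X * uᴴ) - Bm * S := by rw [hE, mul_sub]
      have e3 : ((uᴴ * Bm * u) * X).trace = (Bm * (u * X * uᴴ)).trace := by
        calc ((uᴴ * Bm * u) * X).trace = (uᴴ * (Bm * u * X)).trace := by
              congr 1; noncomm_ring
          _ = ((Bm * u * X) * uᴴ).trace := trace_mul_comm _ _
          _ = (Bm * (u * X * uᴴ)).trace := by congr 1; noncomm_ring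
      rw [e1, e2, trace_sub, trace_sub, e3, ← hXB, ← hSB, trace_mul_comm Bm X, trace_mul_comm Bm S]
      ring
    have hX1 : traceNorm X = 1 := by
      have hps : X.PosSemidef := posSemidef_kron (hρ n) (hω' n)
      have h := traceNorm_psd_eq_trace hps
      rw [hX, trace_kronecker, hρtr n, hω'tr n, mul_one] at h
      exact_mod_cast h
    have h4 : ‖((uᴴ * Cm) * X).trace‖ ≤ opNorm Cm := by
      have hh := holder (uᴴ * Cm) X
      rw [opNorm_unitary_left (hU n).2, hX1, mul_one] at hh
      exact hh
    have h5 : ‖(Bm * E).trace‖ ≤ ((n : ℝ) * opNorm (A j)) * traceNorm E := by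
      refine (holder Bm E).trans ?_
      exact mul_le_mul_of_nonneg_right
        ((opNorm_kron_one N).trans (opNorm_liftCharge (A j) n)) (traceNorm_nonneg E)
    have key2 : ‖(ρ n * N).trace - (σ n * N).trace‖
        ≤ (n : ℝ) * opNorm (A j) * traceNorm E + opNorm Cm := by
      rw [key]
      refine (norm_add_le _ _).trans ?_
      linarith
    rcases Nat.eq_zero_or_pos n with hn | hn
    · subst hn
      simp only [Nat.cast_zero, div_zero, zero_mul, one_div, _root_.inv_zero]
      exact add_nonneg (mul_nonneg hopA0 (traceNorm_nonneg _)) le_rfl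
    · have hn' : (0 : ℝ) < n := by exact_mod_cast hn
      have hmul := mul_le_mul_of_nonneg_left key2 (le_of_lt (one_div_pos.mpr hn'))
      refine hmul.trans ?_
      rw [mul_add]
      have heq : (1 / (n : ℝ)) * ((n : ℝ) * opNorm (A j) * traceNorm E)
          = opNorm (A j) * traceNorm E := by
        rw [one_div, ← mul_assoc, ← mul_assoc, inv_mul_cancel₀ (ne_of_gt hn'), one_mul]
      rw [heq]
end
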